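/- Characterization of the subgame perfect equilibria of the 0,1-game: for every strategy profile s with S0(s) or S1(s), (SAcBes(s) ∨ SBcAes(s)) holds if and only if SPE(s) holds. -/

import Mathlib

/-- The two agents of the game. -/
inductive Agent : Type
  | A
  | B

/-- The two choices: down and right. -/
inductive Choice : Type
  | d
  | r

/-- Payoff assignments for the agents. -/
abbrev Payoffs : Type := Agent → ℝ

/-! ### Strategy profiles: final coalgebra of `X ↦ ℝ^P + P × Choice × X × X` -/

def StratProfF : PFunctor.{0} :=
  ⟨Payoffs ⊕ (Agent × Choice), fun x =>
    match x with
    | Sum.inl _ => Empty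
    | Sum.inr _ => Bool⟩

/-- Strategy profiles: the final coalgebra (M-type) of `StratProfF`. -/
abbrev StratProf : Type := StratProfF.M

/-- Leaf strategy profile `⟨⟨f⟩⟩`. -/
def sleaf (f : Payoffs) : StratProf :=
  PFunctor.M.mk ⟨Sum.inl f, fun (e : Empty) => e.elim⟩

/-- Node strategy profile `⟨⟨p, c, s_d, s_r⟩⟩` (`true` child = down, `false` child = right). -/
def snode (p : Agent) (c : Choice) (sd sr : StratProf) : StratProf :=
  PFunctor.M.mk ⟨Sum.inr (p, c), fun (b : Bool) => if b then sd else sr⟩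

/-- Convergence `↓s`: the least predicate closed under the given rules. -/
inductive Conv : StratProf → Prop
  | leaf (f : Payoffs) : Conv (sleaf f)
  | down (p : Agent) (sd sr : StratProf) : Conv sd → Conv (snode p Choice.d sd sr)
  | right (p : Agent) (sd sr : StratProf) : Conv sr → Conv (snode p Choice.r sd sr)

/-- One step of the strong-convergence condition. -/
def SConvStep (R : StratProf → Prop) (s : StratProf) : Prop :=
  (∃ f, s = sleaf f) ∨
    ∃ p c sd sr, s = snode p c sd sr ∧ Conv s ∧ R sd ∧ R sr

/-- Strong convergence `⇓s`: the largest predicate `R` with `R ≤ SConvStep R`. -/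
def SConv (s : StratProf) : Prop :=
  ∃ R : StratProf → Prop, R s ∧ ∀ t, R t → SConvStep R t

/-- One step of the `□Φ` condition. -/
def BoxStep (Φ : StratProf → Prop) (R : StratProf → Prop) (t : StratProf) : Prop :=
  Φ t ∧ ∀ p c sd sr, t = snode p c sd sr → R sd ∧ R sr

/-- The modality `□Φ`: the largest predicate `R` with `R ≤ BoxStep Φ R`. -/
def Box (Φ : StratProf → Prop) (s : StratProf) : Prop :=
  ∃ R : StratProf → Prop, R s ∧ ∀ t, R t → BoxStep Φ R t

/-- The partial payoff function `ŝ`, as an inductively defined graph relation: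
`PayoffRel s f` means "`ŝ` is defined and equals `f`". -/
inductive PayoffRel : StratProf → Payoffs → Prop
  | leaf (f : Payoffs) : PayoffRel (sleaf f) f
  | down (p : Agent) (sd sr : StratProf) (f : Payoffs) :
      PayoffRel sd f → PayoffRel (snode p Choice.d sd sr) f
  | right (p : Agent) (sd sr : StratProf) (f : Payoffs) :
      PayoffRel sr f → PayoffRel (snode p Choice.r sd sr) f

/-- Bisimilarity `s' ~ s`: the largest relation satisfying the coinductive clauses. -/
def Bisim (s' s : StratProf) : Prop :=
  ∃ R : StratProf → StratProf → Prop, R s' s ∧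
    ∀ t' t, R t' t →
      ((∃ f, t' = sleaf f ∧ t = sleaf f) ∨
        ∃ p c td' tr' td tr,
          t' = snode p c td' tr' ∧ t = snode p c td tr ∧ R td' td ∧ R tr' tr)

/-- The subprofile relation `s' ≼ s`: the least relation closed under the given rules. -/
inductive Subprof : StratProf → StratProf → Prop
  | bisim {s' s : StratProf} : Bisim s' s → Subprof s' s
  | down {s' : StratProf} {p : Agent} {c : Choice} {sd sr : StratProf} :
      Subprof s' sd → Subprof s' (snode p c sd sr)
  | right {s' : StratProf} {p : Agent} {c : Choice} {sd sr : StratProf} :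
      Subprof s' sr → Subprof s' (snode p c sd sr)

/-! ### Games: final coalgebra of `X ↦ ℝ^P + P × X × X` -/

def GameF : PFunctor.{0} :=
  ⟨Payoffs ⊕ Agent, fun x =>
    match x with
    | Sum.inl _ => Empty
    | Sum.inr _ => Bool⟩

/-- Games: the final coalgebra (M-type) of `GameF`. -/
abbrev Game : Type := GameF.M

/-- Leaf game `⟨f⟩`. -/
def gleaf (f : Payoffs) : Game :=
  PFunctor.M.mk ⟨Sum.inl f, fun (e : Empty) => e.elim⟩

/-- Node game `⟨p, g_d, g_r⟩`. -/
def gnode (p : Agent) (gd gr : Game) : Game :=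
  PFunctor.M.mk ⟨Sum.inr p, fun (b : Bool) => if b then gd else gr⟩

/-- The corecursive function `game : StratProf → Game` erasing the choices. -/
def gameOf : StratProf → Game :=
  PFunctor.M.corec (fun s =>
    match PFunctor.M.dest s with
    | ⟨Sum.inl f, _⟩ => ⟨Sum.inl f, fun (e : Empty) => e.elim⟩
    | ⟨Sum.inr pc, k⟩ => ⟨Sum.inr pc.1, k⟩)

/-! ### Strategies: final coalgebra of `X ↦ ℝ^P + (P + Choice) × X × X` -/

def StratF : PFunctor.{0} :=
  ⟨Payoffs ⊕ (Agent ⊕ Choice), fun x =>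
    match x with
    | Sum.inl _ => Empty
    | Sum.inr _ => Bool⟩

/-- Strategies: the final coalgebra (M-type) of `StratF`. -/
abbrev Strat : Type := StratF.M

/-- Leaf strategy `⟨f⟩`. -/
def stleaf (f : Payoffs) : Strat :=
  PFunctor.M.mk ⟨Sum.inl f, fun (e : Empty) => e.elim⟩

/-- Node strategy `⟨x, st₁, st₂⟩` with `x` an agent or a choice. -/
def stnode (x : Agent ⊕ Choice) (s1 s2 : Strat) : Strat :=
  PFunctor.M.mk ⟨Sum.inr x, fun (b : Bool) => if b then s1 else s2⟩

/-- The corecursive function `st2g` replacing choice labels by the given agent. -/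
def st2gStep (p : Agent) (t : Strat) : GameF.Obj Strat :=
  match PFunctor.M.dest t with
  | ⟨Sum.inl f, _⟩ => ⟨Sum.inl f, fun (e : Empty) => e.elim⟩
  | ⟨Sum.inr (Sum.inl q), k⟩ => ⟨Sum.inr q, k⟩
  | ⟨Sum.inr (Sum.inr _), k⟩ => ⟨Sum.inr p, k⟩

/-- The corecursive function `st2g` replacing choice labels by the given agent. -/
def st2g (st : Strat) (p : Agent) : Game :=
  PFunctor.M.corec (st2gStep p) st

/-- `st` is full for `p`: coinductively, the agent `p` occurs nowhere as a label. -/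
def Full (p : Agent) (st : Strat) : Prop :=
  ∃ R : Strat → Prop, R st ∧ ∀ t, R t →
    (∃ f, t = stleaf f) ∨
      ∃ x s1 s2, t = stnode x s1 s2 ∧ x ≠ Sum.inl p ∧ R s1 ∧ R s2

/-- A one-level view of a strategy. -/
inductive StratView : Type
  | leaf (f : Payoffs)
  | node (x : Agent ⊕ Choice) (k : Bool → Strat)

/-- Destruct a strategy into its one-level view. -/
def stratView (t : Strat) : StratView :=
  match PFunctor.M.dest t with
  | ⟨Sum.inl f, _⟩ => StratView.leaf f
  | ⟨Sum.inr x, k⟩ => StratView.node x k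

/-- One corecursion step for the sum of the strategy of `A` (first component)
and the strategy of `B` (second component). -/
def oplusStep : Strat × Strat → StratProfF.Obj (Strat × Strat) := fun q =>
  match stratView q.1, stratView q.2 with
  | StratView.leaf f, _ => ⟨Sum.inl f, fun (e : Empty) => e.elim⟩
  | StratView.node _ _, StratView.leaf f => ⟨Sum.inl f, fun (e : Empty) => e.elim⟩
  | StratView.node (Sum.inr c) k1, StratView.node (Sum.inl p') k2 =>
      ⟨Sum.inr (p', c), fun (b : Bool) => (k1 b, k2 b)⟩
  | StratView.node (Sum.inr c) k1, StratView.node (Sum.inr _) k2 =>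
      ⟨Sum.inr (Agent.A, c), fun (b : Bool) => (k1 b, k2 b)⟩
  | StratView.node (Sum.inl p') k1, StratView.node (Sum.inr c) k2 =>
      ⟨Sum.inr (p', c), fun (b : Bool) => (k1 b, k2 b)⟩
  | StratView.node (Sum.inl p') k1, StratView.node (Sum.inl _) k2 =>
      ⟨Sum.inr (p', Choice.d), fun (b : Bool) => (k1 b, k2 b)⟩

/-- The sum `st_A ⊕ st_B` of the strategies of the two agents. -/
def oplus (stA stB : Strat) : StratProf :=
  PFunctor.M.corec oplusStep (stA, stB)

/-! ### Equilibria -/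

/-- The local equilibrium condition `PE`. -/
def PE (s : StratProf) : Prop :=
  SConv s ∧
    (∀ p sd sr fd fr, s = snode p Choice.d sd sr →
        PayoffRel sd fd → PayoffRel sr fr → fd p ≥ fr p) ∧
    (∀ p sd sr fd fr, s = snode p Choice.r sd sr →
        PayoffRel sd fd → PayoffRel sr fr → fr p ≥ fd p)

/-- Subgame perfect equilibrium: `SPE = □PE`. -/
def SPE : StratProf → Prop := Box PE

/-- Convertibility `s ⊢p⊣ s'`: the inductively defined deviation relation of agent `p`. -/
inductive Convert (p : Agent) : StratProf → StratProf → Prop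
  | bisim {s s' : StratProf} : Bisim s s' → Convert p s s'
  | own {c c' : Choice} {s1 s2 s1' s2' : StratProf} :
      Convert p s1 s1' → Convert p s2 s2' →
      Convert p (snode p c s1 s2) (snode p c' s1' s2')
  | other {p' : Agent} {c : Choice} {s1 s2 s1' s2' : StratProf} :
      Convert p s1 s1' → Convert p s2 s2' →
      Convert p (snode p' c s1 s2) (snode p' c s1' s2')

/-- Nash equilibrium: no agent can improve her payoff by converting
(the inequality being required whenever both payoffs are defined). -/
def Nash (s : StratProf) : Prop :=
  ∀ p s' f f', Convert p s s' → PayoffRel s f → PayoffRel s' f' → f p ≥ f' p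

/-! ### The 0,1-game -/

/-- The payoff function `A ↦ 0, B ↦ 1`. -/
def f01 : Payoffs := fun p => match p with | Agent.A => 0 | Agent.B => 1

/-- The payoff function `A ↦ 1, B ↦ 0`. -/
def f10 : Payoffs := fun p => match p with | Agent.A => 1 | Agent.B => 0

/-- `S01 true = S0` and `S01 false = S1`: the largest pair of predicates
characterizing the strategy profiles of the 0,1-game. -/
def S01 (i : Bool) (s : StratProf) : Prop :=
  ∃ R : Bool → StratProf → Prop, R i s ∧
    (∀ t, R true t → ∃ c s', t = snode Agent.A c (sleaf f01) s' ∧ R false s') ∧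
    (∀ t, R false t → ∃ c s', t = snode Agent.B c (sleaf f10) s' ∧ R true s')

def S0 : StratProf → Prop := S01 true
def S1 : StratProf → Prop := S01 false

/-- One step of the `AcBes` condition. -/
def AcBesStep (R : StratProf → Prop) (s : StratProf) : Prop :=
  ∀ p c f s', s = snode p c (sleaf f) s' →
    (p = Agent.A ∧ f = f01 ∧ c = Choice.r ∧ R s') ∨
    (p = Agent.B ∧ f = f10 ∧ (c = Choice.d ∨ R s'))

/-- `AcBes`: "A continues and B eventually stops", the least predicate `R`
such that `AcBesStep R ≤ R` (impredicative encoding of the least fixed point). -/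
def AcBes (s : StratProf) : Prop :=
  ∀ R : StratProf → Prop, (∀ t, AcBesStep R t → R t) → R s

/-- One step of the `BcAes` condition. -/
def BcAesStep (R : StratProf → Prop) (s : StratProf) : Prop :=
  ∀ p c f s', s = snode p c (sleaf f) s' →
    (p = Agent.B ∧ f = f10 ∧ c = Choice.r ∧ R s') ∨
    (p = Agent.A ∧ f = f01 ∧ (c = Choice.d ∨ R s'))

/-- `BcAes`: "B continues and A eventually stops", symmetric to `AcBes`. -/
def BcAes (s : StratProf) : Prop :=
  ∀ R : StratProf → Prop, (∀ t, BcAesStep R t → R t) → R s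

def SAcBes : StratProf → Prop := Box AcBes
def SBcAes : StratProf → Prop := Box BcAes

/-! ### The 0,1-game `g01`, the escalation strategies and the all-continue profile -/

/-- Corecursion step for `g01` and `g10`:
`inl true ↦ g01`, `inl false ↦ g10`, `inr true ↦ ⟨f01⟩`, `inr false ↦ ⟨f10⟩`. -/
def g01Step : Bool ⊕ Bool → GameF.Obj (Bool ⊕ Bool)
  | Sum.inl true => ⟨Sum.inr Agent.A, fun (b : Bool) => if b then Sum.inr true else Sum.inl false⟩
  | Sum.inl false => ⟨Sum.inr Agent.B, fun (b : Bool) => if b then Sum.inr false else Sum.inl true⟩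
  | Sum.inr true => ⟨Sum.inl f01, fun (e : Empty) => e.elim⟩
  | Sum.inr false => ⟨Sum.inl f10, fun (e : Empty) => e.elim⟩

/-- The 0,1-game: `g01 = ⟨A, ⟨f01⟩, g10⟩` where `g10 = ⟨B, ⟨f10⟩, g01⟩`. -/
def g01 : Game := PFunctor.M.corec g01Step (Sum.inl true)

/-- `g10 = ⟨B, ⟨f10⟩, g01⟩`. -/
def g10 : Game := PFunctor.M.corec g01Step (Sum.inl false)

/-- Corecursion step for `st_{A,∞} = ⟨r, ⟨f01⟩, ⟨B, ⟨f10⟩, st_{A,∞}⟩⟩`. -/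
def stAinfStep : ℕ → StratF.Obj ℕ
  | 0 => ⟨Sum.inr (Sum.inr Choice.r), fun (b : Bool) => if b then 2 else 1⟩
  | 1 => ⟨Sum.inr (Sum.inl Agent.B), fun (b : Bool) => if b then 3 else 0⟩
  | 2 => ⟨Sum.inl f01, fun (e : Empty) => e.elim⟩
  | _ => ⟨Sum.inl f10, fun (e : Empty) => e.elim⟩

/-- The escalation strategy of `A`: `st_{A,∞} = ⟨r, ⟨f01⟩, ⟨B, ⟨f10⟩, st_{A,∞}⟩⟩`. -/
def stAinf : Strat := PFunctor.M.corec stAinfStep 0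

/-- Corecursion step for `st_{B,∞} = ⟨A, ⟨f01⟩, ⟨r, ⟨f10⟩, st_{B,∞}⟩⟩`. -/
def stBinfStep : ℕ → StratF.Obj ℕ
  | 0 => ⟨Sum.inr (Sum.inl Agent.A), fun (b : Bool) => if b then 2 else 1⟩
  | 1 => ⟨Sum.inr (Sum.inr Choice.r), fun (b : Bool) => if b then 3 else 0⟩
  | 2 => ⟨Sum.inl f01, fun (e : Empty) => e.elim⟩
  | _ => ⟨Sum.inl f10, fun (e : Empty) => e.elim⟩

/-- The escalation strategy of `B`: `st_{B,∞} = ⟨A, ⟨f01⟩, ⟨r, ⟨f10⟩, st_{B,∞}⟩⟩`. -/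
def stBinf : Strat := PFunctor.M.corec stBinfStep 0

/-- Corecursion step for the all-continue profile
`s_{A,∞} = ⟨⟨A, r, ⟨⟨f01⟩⟩, s_{B,∞}⟩⟩`, `s_{B,∞} = ⟨⟨B, r, ⟨⟨f10⟩⟩, s_{A,∞}⟩⟩`. -/
def sAinfStep : ℕ → StratProfF.Obj ℕ
  | 0 => ⟨Sum.inr (Agent.A, Choice.r), fun (b : Bool) => if b then 2 else 1⟩
  | 1 => ⟨Sum.inr (Agent.B, Choice.r), fun (b : Bool) => if b then 3 else 0⟩
  | 2 => ⟨Sum.inl f01, fun (e : Empty) => e.elim⟩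
  | _ => ⟨Sum.inl f10, fun (e : Empty) => e.elim⟩

/-- The all-continue profile `s_{A,∞}` of the 0,1-game. -/
def sAinf : StratProf := PFunctor.M.corec sAinfStep 0

/-- The profile `s_{B,∞}`. -/
def sBinf : StratProf := PFunctor.M.corec sAinfStep 1

/-- `s_□r`, the profile of the 0,1-game where both agents continue forever
(it satisfies `s_□r = ⟨⟨A, r, ⟨⟨f01⟩⟩, ⟨⟨B, r, ⟨⟨f10⟩⟩, s_□r⟩⟩⟩⟩`). -/
def sBoxr : StratProf := sAinf

/-- `s_{d□r} = ⟨⟨A, d, ⟨⟨f01⟩⟩, ⟨⟨B, r, ⟨⟨f10⟩⟩, s_□r⟩⟩⟩⟩`. -/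
def sdBoxr : StratProf :=
  snode Agent.A Choice.d (sleaf f01) (snode Agent.B Choice.r (sleaf f10) sBoxr)

/-! ### Finite games and profiles -/

/-- Finite strategy profiles. -/
inductive FinStratProf : Type
  | leaf (f : Payoffs)
  | node (p : Agent) (c : Choice) (sd sr : FinStratProf)

/-- Finite games. -/
inductive FinGame : Type
  | leaf (f : Payoffs)
  | node (p : Agent) (gd gr : FinGame)

/-- The (total) payoff function of a finite strategy profile. -/
def fpayoff : FinStratProf → Payoffs
  | FinStratProf.leaf f => f
  | FinStratProf.node _ Choice.d sd _ => fpayoff sd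
  | FinStratProf.node _ Choice.r _ sr => fpayoff sr

/-- The game of a finite strategy profile (erasing the choices). -/
def fgame : FinStratProf → FinGame
  | FinStratProf.leaf f => FinGame.leaf f
  | FinStratProf.node p _ sd sr => FinGame.node p (fgame sd) (fgame sr)

/-- Backward induction for finite strategy profiles. -/
inductive BI : FinStratProf → Prop
  | leaf (f : Payoffs) : BI (FinStratProf.leaf f)
  | node (p : Agent) (c : Choice) (sd sr : FinStratProf) :
      BI sd → BI sr →
      (c = Choice.d → fpayoff sd p ≥ fpayoff sr p) →
      (c = Choice.r → fpayoff sr p ≥ fpayoff sd p) →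
      BI (FinStratProf.node p c sd sr)

/-- The family `F01` of finite truncations of the 0,1-game (cut after `B`). -/
inductive F01 : FinGame → Prop
  | base : F01 (FinGame.leaf f01)
  | step (g : FinGame) : F01 g →
      F01 (FinGame.node Agent.A (FinGame.leaf f01) (FinGame.node Agent.B (FinGame.leaf f10) g))

/-- `SF01`: agent B always continues, agent A does whatever she likes. -/
inductive SF01 : FinStratProf → Prop
  | base : SF01 (FinStratProf.leaf f01)
  | step (c : Choice) (s' : FinStratProf) : SF01 s' →
      SF01 (FinStratProf.node Agent.A c (FinStratProf.leaf f01)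
        (FinStratProf.node Agent.B Choice.r (FinStratProf.leaf f10) s'))

mutual
  /-- The family `K01` of finite truncations of the 0,1-game (cut after `A`). -/
  inductive K01 : FinGame → Prop
    | step (g : FinGame) : K01' g → K01 (FinGame.node Agent.A (FinGame.leaf f01) g)
  /-- The auxiliary family `K01'`. -/
  inductive K01' : FinGame → Prop
    | base : K01' (FinGame.leaf f10)
    | step (g : FinGame) : K01 g → K01' (FinGame.node Agent.B (FinGame.leaf f10) g)
end

mutual
  /-- `SK01`: agent A always continues, agent B does whatever she likes. -/
  inductive SK01 : FinStratProf → Prop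
    | step (s' : FinStratProf) : SK01' s' →
        SK01 (FinStratProf.node Agent.A Choice.r (FinStratProf.leaf f01) s')
  /-- The auxiliary predicate `SK01'`. -/
  inductive SK01' : FinStratProf → Prop
    | base : SK01' (FinStratProf.leaf f10)
    | step (c : Choice) (s' : FinStratProf) : SK01 s' →
        SK01' (FinStratProf.node Agent.B c (FinStratProf.leaf f10) s')
end

lemma snode_inj {p p' : Agent} {c c' : Choice} {sd sr sd' sr' : StratProf}
    (h : snode p c sd sr = snode p' c' sd' sr') :
    p = p' ∧ c = c' ∧ sd = sd' ∧ sr = sr' := by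
  have h1 := congrArg PFunctor.M.dest h
  rw [snode, snode] at h1
  erw [PFunctor.M.dest_mk, PFunctor.M.dest_mk] at h1
  injection h1 with h2 h3
  injection h2 with h2
  injection h2 with hp hc
  subst hp; subst hc
  have h4 := h3
  exact ⟨rfl, rfl, by simpa using congrFun h4 true, by simpa using congrFun h4 false⟩

lemma sleaf_ne_snode {f : Payoffs} {p : Agent} {c : Choice} {sd sr : StratProf} :
    sleaf f ≠ snode p c sd sr := by
  intro h
  have h1 := congrArg PFunctor.M.dest h
  rw [sleaf, snode] at h1
  erw [PFunctor.M.dest_mk, PFunctor.M.dest_mk] at h1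
  injection h1 with h2 h3
  exact Sum.inl_ne_inr h2

lemma sleaf_inj {f g : Payoffs} (h : sleaf f = sleaf g) : f = g := by
  have h1 := congrArg PFunctor.M.dest h
  rw [sleaf, sleaf] at h1
  erw [PFunctor.M.dest_mk, PFunctor.M.dest_mk] at h1
  injection h1 with h2 h3
  exact Sum.inl.inj h2
/-! Inversion lemmas for PayoffRel -/

lemma payoffRel_leaf_inv {s : StratProf} {g : Payoffs} (h : PayoffRel s g) :
    ∀ f, s = sleaf f → g = f := by
  induction h with
  | leaf f => intro f' hf; exact sleaf_inj hf
  | down p sd sr f _ _ => intro f' hf; exact absurd hf.symm sleaf_ne_snode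
  | right p sd sr f _ _ => intro f' hf; exact absurd hf.symm sleaf_ne_snode

lemma payoffRel_down_inv {s : StratProf} {g : Payoffs} (h : PayoffRel s g) :
    ∀ p sd sr, s = snode p Choice.d sd sr → PayoffRel sd g := by
  induction h with
  | leaf f => intro p sd sr hf; exact absurd hf sleaf_ne_snode
  | down p sd sr f hd _ =>
      intro p' sd' sr' hf
      obtain ⟨_, _, h3, _⟩ := snode_inj hf
      exact h3 ▸ hd
  | right p sd sr f hr _ =>
      intro p' sd' sr' hf
      obtain ⟨_, hc, _, _⟩ := snode_inj hf
      exact absurd hc (by simp)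

lemma payoffRel_right_inv {s : StratProf} {g : Payoffs} (h : PayoffRel s g) :
    ∀ p sd sr, s = snode p Choice.r sd sr → PayoffRel sr g := by
  induction h with
  | leaf f => intro p sd sr hf; exact absurd hf sleaf_ne_snode
  | down p sd sr f hd _ =>
      intro p' sd' sr' hf
      obtain ⟨_, hc, _, _⟩ := snode_inj hf
      exact absurd hc (by simp)
  | right p sd sr f hr _ =>
      intro p' sd' sr' hf
      obtain ⟨_, _, _, h4⟩ := snode_inj hf
      exact h4 ▸ hr

lemma payoffRel_unique {s : StratProf} {f g : Payoffs}
    (h1 : PayoffRel s f) (h2 : PayoffRel s g) : f = g := by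
  induction h1 generalizing g with
  | leaf f' => exact (payoffRel_leaf_inv h2 f' rfl).symm
  | down p sd sr f' _ ih => exact ih (payoffRel_down_inv h2 p sd sr rfl)
  | right p sd sr f' _ ih => exact ih (payoffRel_right_inv h2 p sd sr rfl)

lemma conv_payoff {s : StratProf} (h : Conv s) : ∃ f, PayoffRel s f := by
  induction h with
  | leaf f => exact ⟨f, PayoffRel.leaf f⟩
  | down p sd sr _ ih => obtain ⟨f, hf⟩ := ih; exact ⟨f, PayoffRel.down p sd sr f hf⟩
  | right p sd sr _ ih => obtain ⟨f, hf⟩ := ih; exact ⟨f, PayoffRel.right p sd sr f hf⟩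

/-! Box lemmas -/

lemma box_dest {Φ : StratProf → Prop} {s : StratProf} (h : Box Φ s) :
    Φ s ∧ ∀ p c sd sr, s = snode p c sd sr → Box Φ sd ∧ Box Φ sr := by
  obtain ⟨R, hRs, hstep⟩ := h
  obtain ⟨hΦ, hch⟩ := hstep s hRs
  exact ⟨hΦ, fun p c sd sr he =>
    ⟨⟨R, (hch p c sd sr he).1, hstep⟩, ⟨R, (hch p c sd sr he).2, hstep⟩⟩⟩

/-! S01 lemmas -/

lemma s0_dest {s : StratProf} (h : S0 s) :
    ∃ c s', s = snode Agent.A c (sleaf f01) s' ∧ S1 s' := by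
  obtain ⟨R, hRs, h0, h1⟩ := h
  obtain ⟨c, s', he, hs'⟩ := h0 s hRs
  exact ⟨c, s', he, ⟨R, hs', h0, h1⟩⟩

lemma s1_dest {s : StratProf} (h : S1 s) :
    ∃ c s', s = snode Agent.B c (sleaf f10) s' ∧ S0 s' := by
  obtain ⟨R, hRs, h0, h1⟩ := h
  obtain ⟨c, s', he, hs'⟩ := h1 s hRs
  exact ⟨c, s', he, ⟨R, hs', h0, h1⟩⟩

/-! SConv -/

lemma sconv_conv {s : StratProf} (h : SConv s) : Conv s := by
  obtain ⟨R, hRs, hstep⟩ := h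
  rcases hstep s hRs with ⟨f, rfl⟩ | ⟨p, c, sd, sr, rfl, hc, _, _⟩
  · exact Conv.leaf f
  · exact hc

/-! AcBes / BcAes basic lemmas -/

lemma acBesStep_mono {R R' : StratProf → Prop} (hRR : ∀ x, R x → R' x)
    {t : StratProf} (h : AcBesStep R t) : AcBesStep R' t := by
  intro p c f s' he
  rcases h p c f s' he with ⟨h1, h2, h3, h4⟩ | ⟨h1, h2, h3⟩
  · exact Or.inl ⟨h1, h2, h3, hRR _ h4⟩
  · exact Or.inr ⟨h1, h2, h3.imp id (hRR _)⟩

lemma acBes_fold {s : StratProf} (h : AcBesStep AcBes s) : AcBes s := by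
  intro R hR
  exact hR s (acBesStep_mono (fun x hx => hx R hR) h)

lemma acBes_dest {s : StratProf} (h : AcBes s) : AcBesStep AcBes s := by
  refine h (AcBesStep AcBes) (fun t ht => ?_)
  exact acBesStep_mono (fun x hx => acBes_fold hx) ht

lemma acBes_leaf (f : Payoffs) : AcBes (sleaf f) := by
  refine acBes_fold (fun p c g s' he => absurd he sleaf_ne_snode)

lemma bcBesStep_mono {R R' : StratProf → Prop} (hRR : ∀ x, R x → R' x)
    {t : StratProf} (h : BcAesStep R t) : BcAesStep R' t := by
  intro p c f s' he
  rcases h p c f s' he with ⟨h1, h2, h3, h4⟩ | ⟨h1, h2, h3⟩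
  · exact Or.inl ⟨h1, h2, h3, hRR _ h4⟩
  · exact Or.inr ⟨h1, h2, h3.imp id (hRR _)⟩

lemma bcAes_fold {s : StratProf} (h : BcAesStep BcAes s) : BcAes s := by
  intro R hR
  exact hR s (bcBesStep_mono (fun x hx => hx R hR) h)

lemma bcAes_dest {s : StratProf} (h : BcAes s) : BcAesStep BcAes s := by
  refine h (BcAesStep BcAes) (fun t ht => ?_)
  exact bcBesStep_mono (fun x hx => bcAes_fold hx) ht

lemma bcAes_leaf (f : Payoffs) : BcAes (sleaf f) := by
  refine bcAes_fold (fun p c g s' he => absurd he sleaf_ne_snode)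

lemma f01_ne_f10 : f01 ≠ f10 := by
  intro h
  have := congrFun h Agent.A
  simp [f01, f10] at this
/-! ⇒ direction: SAcBes / SBcAes imply SPE -/

lemma acBes_conv {s : StratProf} (h : AcBes s) : (S0 s ∨ S1 s) → Conv s := by
  refine h (fun u => (S0 u ∨ S1 u) → Conv u) (fun t ht hst => ?_) 
  rcases hst with h0 | h1
  · obtain ⟨c, s', rfl, hs1⟩ := s0_dest h0
    rcases ht Agent.A c f01 s' rfl with ⟨_, _, hc, hR⟩ | ⟨hB, _, _⟩
    · subst hc; exact Conv.right _ _ _ (hR (Or.inr hs1))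
    · exact Agent.noConfusion hB
  · obtain ⟨c, s', rfl, hs0⟩ := s1_dest h1
    rcases ht Agent.B c f10 s' rfl with ⟨hA, _, _, _⟩ | ⟨_, _, hcd⟩
    · exact Agent.noConfusion hA
    · cases c with
      | d => exact Conv.down _ _ _ (Conv.leaf f10)
      | r =>
          rcases hcd with hc | hR
          · exact Choice.noConfusion hc
          · exact Conv.right _ _ _ (hR (Or.inl hs0))

lemma acBes_payoff {s : StratProf} (h : AcBes s) : (S0 s ∨ S1 s) → PayoffRel s f10 := by
  refine h (fun u => (S0 u ∨ S1 u) → PayoffRel u f10) (fun t ht hst => ?_)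
  rcases hst with h0 | h1
  · obtain ⟨c, s', rfl, hs1⟩ := s0_dest h0
    rcases ht Agent.A c f01 s' rfl with ⟨_, _, hc, hR⟩ | ⟨hB, _, _⟩
    · subst hc; exact PayoffRel.right _ _ _ _ (hR (Or.inr hs1))
    · exact Agent.noConfusion hB
  · obtain ⟨c, s', rfl, hs0⟩ := s1_dest h1
    rcases ht Agent.B c f10 s' rfl with ⟨hA, _, _, _⟩ | ⟨_, _, hcd⟩
    · exact Agent.noConfusion hA
    · cases c with
      | d => exact PayoffRel.down _ _ _ _ (PayoffRel.leaf f10)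
      | r =>
          rcases hcd with hc | hR
          · exact Choice.noConfusion hc
          · exact PayoffRel.right _ _ _ _ (hR (Or.inl hs0))

lemma bcAes_conv {s : StratProf} (h : BcAes s) : (S0 s ∨ S1 s) → Conv s := by
  refine h (fun u => (S0 u ∨ S1 u) → Conv u) (fun t ht hst => ?_)
  rcases hst with h0 | h1
  · obtain ⟨c, s', rfl, hs1⟩ := s0_dest h0
    rcases ht Agent.A c f01 s' rfl with ⟨hB, _, _, _⟩ | ⟨_, _, hcd⟩
    · exact Agent.noConfusion hB
    · cases c with
      | d => exact Conv.down _ _ _ (Conv.leaf f01)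
      | r =>
          rcases hcd with hc | hR
          · exact Choice.noConfusion hc
          · exact Conv.right _ _ _ (hR (Or.inr hs1))
  · obtain ⟨c, s', rfl, hs0⟩ := s1_dest h1
    rcases ht Agent.B c f10 s' rfl with ⟨_, _, hc, hR⟩ | ⟨hA, _, _⟩
    · subst hc; exact Conv.right _ _ _ (hR (Or.inl hs0))
    · exact Agent.noConfusion hA

lemma bcAes_payoff {s : StratProf} (h : BcAes s) : (S0 s ∨ S1 s) → PayoffRel s f01 := by
  refine h (fun u => (S0 u ∨ S1 u) → PayoffRel u f01) (fun t ht hst => ?_)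
  rcases hst with h0 | h1
  · obtain ⟨c, s', rfl, hs1⟩ := s0_dest h0
    rcases ht Agent.A c f01 s' rfl with ⟨hB, _, _, _⟩ | ⟨_, _, hcd⟩
    · exact Agent.noConfusion hB
    · cases c with
      | d => exact PayoffRel.down _ _ _ _ (PayoffRel.leaf f01)
      | r =>
          rcases hcd with hc | hR
          · exact Choice.noConfusion hc
          · exact PayoffRel.right _ _ _ _ (hR (Or.inr hs1))
  · obtain ⟨c, s', rfl, hs0⟩ := s1_dest h1
    rcases ht Agent.B c f10 s' rfl with ⟨_, _, hc, hR⟩ | ⟨hA, _, _⟩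
    · subst hc; exact PayoffRel.right _ _ _ _ (hR (Or.inl hs0))
    · exact Agent.noConfusion hA

lemma sconv_of_boxAcBes {s : StratProf} (h : Box AcBes s) (hs : S0 s ∨ S1 s) : SConv s := by
  refine ⟨fun u => (∃ f, u = sleaf f) ∨ ((S0 u ∨ S1 u) ∧ Box AcBes u), Or.inr ⟨hs, h⟩, ?_⟩
  rintro t (⟨f, rfl⟩ | ⟨hst, hbox⟩)
  · exact Or.inl ⟨f, rfl⟩
  · refine Or.inr ?_
    have hconv : Conv t := acBes_conv (box_dest hbox).1 hst
    rcases hst with h0 | h1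
    · obtain ⟨c, s', rfl, hs1⟩ := s0_dest h0
      exact ⟨_, _, _, _, rfl, hconv, Or.inl ⟨f01, rfl⟩,
        Or.inr ⟨Or.inr hs1, ((box_dest hbox).2 _ _ _ _ rfl).2⟩⟩
    · obtain ⟨c, s', rfl, hs0⟩ := s1_dest h1
      exact ⟨_, _, _, _, rfl, hconv, Or.inl ⟨f10, rfl⟩,
        Or.inr ⟨Or.inl hs0, ((box_dest hbox).2 _ _ _ _ rfl).2⟩⟩

lemma sconv_of_boxBcAes {s : StratProf} (h : Box BcAes s) (hs : S0 s ∨ S1 s) : SConv s := by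
  refine ⟨fun u => (∃ f, u = sleaf f) ∨ ((S0 u ∨ S1 u) ∧ Box BcAes u), Or.inr ⟨hs, h⟩, ?_⟩
  rintro t (⟨f, rfl⟩ | ⟨hst, hbox⟩)
  · exact Or.inl ⟨f, rfl⟩
  · refine Or.inr ?_
    have hconv : Conv t := bcAes_conv (box_dest hbox).1 hst
    rcases hst with h0 | h1
    · obtain ⟨c, s', rfl, hs1⟩ := s0_dest h0
      exact ⟨_, _, _, _, rfl, hconv, Or.inl ⟨f01, rfl⟩,
        Or.inr ⟨Or.inr hs1, ((box_dest hbox).2 _ _ _ _ rfl).2⟩⟩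
    · obtain ⟨c, s', rfl, hs0⟩ := s1_dest h1
      exact ⟨_, _, _, _, rfl, hconv, Or.inl ⟨f10, rfl⟩,
        Or.inr ⟨Or.inl hs0, ((box_dest hbox).2 _ _ _ _ rfl).2⟩⟩

lemma pe_leaf (f : Payoffs) : PE (sleaf f) := by
  refine ⟨⟨fun u => u = sleaf f, rfl, fun t ht => Or.inl ⟨f, ht⟩⟩, ?_, ?_⟩
  · intro p sd sr fd fr he; exact absurd he sleaf_ne_snode
  · intro p sd sr fd fr he; exact absurd he sleaf_ne_snode

lemma pe_of_boxAcBes {s : StratProf} (h : Box AcBes s) (hs : S0 s ∨ S1 s) : PE s := by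
  have hAc := (box_dest h).1
  refine ⟨sconv_of_boxAcBes h hs, ?_, ?_⟩
  · intro p sd sr fd fr he hfd hfr
    rcases hs with h0 | h1
    · obtain ⟨c, s', he', hs1⟩ := s0_dest h0
      rcases acBes_dest hAc Agent.A c f01 s' he' with ⟨_, _, hc, _⟩ | ⟨hB, _, _⟩
      · subst hc
        obtain ⟨_, hc2, _, _⟩ := snode_inj (he.symm.trans he')
        exact Choice.noConfusion hc2
      · exact Agent.noConfusion hB
    · obtain ⟨c, s', he', hs0⟩ := s1_dest h1
      obtain ⟨hp, hc, hsd, hsr⟩ := snode_inj (he.symm.trans he')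
      subst hp; subst hsd; subst hsr
      have hfd' : fd = f10 := payoffRel_leaf_inv hfd f10 rfl
      have hpr : PayoffRel sr f10 :=
        acBes_payoff (box_dest ((box_dest h).2 _ _ _ _ he').2).1 (Or.inl hs0)
      have hfr' : fr = f10 := payoffRel_unique hfr hpr
      subst hfd'; subst hfr'
      norm_num [f10]
  · intro p sd sr fd fr he hfd hfr
    rcases hs with h0 | h1
    · obtain ⟨c, s', he', hs1⟩ := s0_dest h0
      obtain ⟨hp, hc, hsd, hsr⟩ := snode_inj (he.symm.trans he')
      subst hp; subst hsd; subst hsr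
      have hfd' : fd = f01 := payoffRel_leaf_inv hfd f01 rfl
      have hpr : PayoffRel sr f10 :=
        acBes_payoff (box_dest ((box_dest h).2 _ _ _ _ he').2).1 (Or.inr hs1)
      have hfr' : fr = f10 := payoffRel_unique hfr hpr
      subst hfd'; subst hfr'
      norm_num [f01, f10]
    · obtain ⟨c, s', he', hs0⟩ := s1_dest h1
      obtain ⟨hp, hc, hsd, hsr⟩ := snode_inj (he.symm.trans he')
      subst hp; subst hsd; subst hsr
      have hfd' : fd = f10 := payoffRel_leaf_inv hfd f10 rfl
      have hpr : PayoffRel sr f10 :=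
        acBes_payoff (box_dest ((box_dest h).2 _ _ _ _ he').2).1 (Or.inl hs0)
      have hfr' : fr = f10 := payoffRel_unique hfr hpr
      subst hfd'; subst hfr'
      norm_num [f10]

lemma pe_of_boxBcAes {s : StratProf} (h : Box BcAes s) (hs : S0 s ∨ S1 s) : PE s := by
  have hBc := (box_dest h).1
  refine ⟨sconv_of_boxBcAes h hs, ?_, ?_⟩
  · intro p sd sr fd fr he hfd hfr
    rcases hs with h0 | h1
    · obtain ⟨c, s', he', hs1⟩ := s0_dest h0
      obtain ⟨hp, hc, hsd, hsr⟩ := snode_inj (he.symm.trans he')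
      subst hp; subst hsd; subst hsr
      have hfd' : fd = f01 := payoffRel_leaf_inv hfd f01 rfl
      have hpr : PayoffRel sr f01 :=
        bcAes_payoff (box_dest ((box_dest h).2 _ _ _ _ he').2).1 (Or.inr hs1)
      have hfr' : fr = f01 := payoffRel_unique hfr hpr
      subst hfd'; subst hfr'
      norm_num [f01]
    · obtain ⟨c, s', he', hs0⟩ := s1_dest h1
      rcases bcAes_dest hBc Agent.B c f10 s' he' with ⟨_, _, hc, _⟩ | ⟨hA, _, _⟩
      · subst hc
        obtain ⟨_, hc2, _, _⟩ := snode_inj (he.symm.trans he')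
        exact Choice.noConfusion hc2
      · exact Agent.noConfusion hA
  · intro p sd sr fd fr he hfd hfr
    rcases hs with h0 | h1
    · obtain ⟨c, s', he', hs1⟩ := s0_dest h0
      obtain ⟨hp, hc, hsd, hsr⟩ := snode_inj (he.symm.trans he')
      subst hp; subst hsd; subst hsr
      have hfd' : fd = f01 := payoffRel_leaf_inv hfd f01 rfl
      have hpr : PayoffRel sr f01 :=
        bcAes_payoff (box_dest ((box_dest h).2 _ _ _ _ he').2).1 (Or.inr hs1)
      have hfr' : fr = f01 := payoffRel_unique hfr hpr
      subst hfd'; subst hfr'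
      norm_num [f01]
    · obtain ⟨c, s', he', hs0⟩ := s1_dest h1
      obtain ⟨hp, hc, hsd, hsr⟩ := snode_inj (he.symm.trans he')
      subst hp; subst hsd; subst hsr
      have hfd' : fd = f10 := payoffRel_leaf_inv hfd f10 rfl
      have hpr : PayoffRel sr f01 :=
        bcAes_payoff (box_dest ((box_dest h).2 _ _ _ _ he').2).1 (Or.inl hs0)
      have hfr' : fr = f01 := payoffRel_unique hfr hpr
      subst hfd'; subst hfr'
      norm_num [f01, f10]

lemma spe_of_boxAcBes {s : StratProf} (h : Box AcBes s) (hs : S0 s ∨ S1 s) : SPE s := by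
  refine ⟨fun u => (∃ f, u = sleaf f) ∨ ((S0 u ∨ S1 u) ∧ Box AcBes u), Or.inr ⟨hs, h⟩, ?_⟩
  rintro t (⟨f, rfl⟩ | ⟨hst, hbox⟩)
  · exact ⟨pe_leaf f, fun p c sd sr he => absurd he sleaf_ne_snode⟩
  · refine ⟨pe_of_boxAcBes hbox hst, ?_⟩
    intro p c sd sr he
    rcases hst with h0 | h1
    · obtain ⟨c', s', he', hs1⟩ := s0_dest h0
      obtain ⟨hp, hc, hsd, hsr⟩ := snode_inj (he.symm.trans he')
      exact ⟨Or.inl ⟨f01, hsd⟩, Or.inr ⟨Or.inr (hsr ▸ hs1), hsr ▸ ((box_dest hbox).2 _ _ _ _ he').2⟩⟩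
    · obtain ⟨c', s', he', hs0⟩ := s1_dest h1
      obtain ⟨hp, hc, hsd, hsr⟩ := snode_inj (he.symm.trans he')
      exact ⟨Or.inl ⟨f10, hsd⟩, Or.inr ⟨Or.inl (hsr ▸ hs0), hsr ▸ ((box_dest hbox).2 _ _ _ _ he').2⟩⟩

lemma spe_of_boxBcAes {s : StratProf} (h : Box BcAes s) (hs : S0 s ∨ S1 s) : SPE s := by
  refine ⟨fun u => (∃ f, u = sleaf f) ∨ ((S0 u ∨ S1 u) ∧ Box BcAes u), Or.inr ⟨hs, h⟩, ?_⟩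
  rintro t (⟨f, rfl⟩ | ⟨hst, hbox⟩)
  · exact ⟨pe_leaf f, fun p c sd sr he => absurd he sleaf_ne_snode⟩
  · refine ⟨pe_of_boxBcAes hbox hst, ?_⟩
    intro p c sd sr he
    rcases hst with h0 | h1
    · obtain ⟨c', s', he', hs1⟩ := s0_dest h0
      obtain ⟨hp, hc, hsd, hsr⟩ := snode_inj (he.symm.trans he')
      exact ⟨Or.inl ⟨f01, hsd⟩, Or.inr ⟨Or.inr (hsr ▸ hs1), hsr ▸ ((box_dest hbox).2 _ _ _ _ he').2⟩⟩
    · obtain ⟨c', s', he', hs0⟩ := s1_dest h1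
      obtain ⟨hp, hc, hsd, hsr⟩ := snode_inj (he.symm.trans he')
      exact ⟨Or.inl ⟨f10, hsd⟩, Or.inr ⟨Or.inl (hsr ▸ hs0), hsr ▸ ((box_dest hbox).2 _ _ _ _ he').2⟩⟩
/-! ⇐ direction: SPE implies SAcBes or SBcAes -/

lemma payoff_val {s : StratProf} {f : Payoffs} (h : PayoffRel s f) :
    (S0 s ∨ S1 s) → f = f01 ∨ f = f10 := by
  induction h with
  | leaf g =>
      rintro (h0 | h1)
      · obtain ⟨c, s', he, _⟩ := s0_dest h0; exact absurd he sleaf_ne_snode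
      · obtain ⟨c, s', he, _⟩ := s1_dest h1; exact absurd he sleaf_ne_snode
  | down p sd sr g hd ih =>
      rintro (h0 | h1)
      · obtain ⟨c, s', he, _⟩ := s0_dest h0
        obtain ⟨_, _, hsd, _⟩ := snode_inj he
        exact Or.inl (payoffRel_leaf_inv hd f01 hsd)
      · obtain ⟨c, s', he, _⟩ := s1_dest h1
        obtain ⟨_, _, hsd, _⟩ := snode_inj he
        exact Or.inr (payoffRel_leaf_inv hd f10 hsd)
  | right p sd sr g hr ih =>
      rintro (h0 | h1)
      · obtain ⟨c, s', he, hs1⟩ := s0_dest h0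
        obtain ⟨_, _, _, hsr⟩ := snode_inj he
        exact ih (Or.inr (hsr ▸ hs1))
      · obtain ⟨c, s', he, hs0⟩ := s1_dest h1
        obtain ⟨_, _, _, hsr⟩ := snode_inj he
        exact ih (Or.inl (hsr ▸ hs0))

lemma step_f10_s0 {s : StratProf} (h0 : S0 s) (hp : PayoffRel s f10) :
    ∃ s', s = snode Agent.A Choice.r (sleaf f01) s' ∧ S1 s' ∧ PayoffRel s' f10 := by
  obtain ⟨c, s', rfl, hs1⟩ := s0_dest h0
  cases c with
  | d =>
      have h1 := payoffRel_down_inv hp _ _ _ rfl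
      have h2 := payoffRel_leaf_inv h1 f01 rfl
      exact absurd h2.symm f01_ne_f10
  | r => exact ⟨s', rfl, hs1, payoffRel_right_inv hp _ _ _ rfl⟩

lemma step_f10_s1 {s : StratProf} (hspe : SPE s) (h1 : S1 s) (hp : PayoffRel s f10) :
    ∃ c s', s = snode Agent.B c (sleaf f10) s' ∧ S0 s' ∧ PayoffRel s' f10 := by
  obtain ⟨c, s', rfl, hs0⟩ := s1_dest h1
  refine ⟨c, s', rfl, hs0, ?_⟩
  have hbox := box_dest hspe
  have hch : Box PE s' := (hbox.2 _ _ _ _ rfl).2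
  have hpe' := (box_dest hch).1
  obtain ⟨f', hf'⟩ := conv_payoff (sconv_conv hpe'.1)
  rcases payoff_val hf' (Or.inl hs0) with rfl | rfl
  · cases c with
    | d =>
        have hineq := hbox.1.2.1 Agent.B _ _ f10 f01 rfl (PayoffRel.leaf f10) hf'
        exact absurd hineq (by norm_num [f01, f10])
    | r =>
        have h2 := payoffRel_right_inv hp _ _ _ rfl
        exact absurd (payoffRel_unique hf' h2) f01_ne_f10
  · exact hf'

lemma step_f01_s1 {s : StratProf} (h1 : S1 s) (hp : PayoffRel s f01) :
    ∃ s', s = snode Agent.B Choice.r (sleaf f10) s' ∧ S0 s' ∧ PayoffRel s' f01 := by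
  obtain ⟨c, s', rfl, hs0⟩ := s1_dest h1
  cases c with
  | d =>
      have h1' := payoffRel_down_inv hp _ _ _ rfl
      have h2 := payoffRel_leaf_inv h1' f10 rfl
      exact absurd h2 f01_ne_f10
  | r => exact ⟨s', rfl, hs0, payoffRel_right_inv hp _ _ _ rfl⟩

lemma step_f01_s0 {s : StratProf} (hspe : SPE s) (h0 : S0 s) (hp : PayoffRel s f01) :
    ∃ c s', s = snode Agent.A c (sleaf f01) s' ∧ S1 s' ∧ PayoffRel s' f01 := by
  obtain ⟨c, s', rfl, hs1⟩ := s0_dest h0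
  refine ⟨c, s', rfl, hs1, ?_⟩
  have hbox := box_dest hspe
  have hch : Box PE s' := (hbox.2 _ _ _ _ rfl).2
  have hpe' := (box_dest hch).1
  obtain ⟨f', hf'⟩ := conv_payoff (sconv_conv hpe'.1)
  rcases payoff_val hf' (Or.inr hs1) with rfl | rfl
  · exact hf'
  · cases c with
    | d =>
        have hineq := hbox.1.2.1 Agent.A _ _ f01 f10 rfl (PayoffRel.leaf f01) hf'
        exact absurd hineq (by norm_num [f01, f10])
    | r =>
        have h2 := payoffRel_right_inv hp _ _ _ rfl
        exact absurd (payoffRel_unique h2 hf') f01_ne_f10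

lemma acBes_of_inv : ∀ s : StratProf, Conv s → SPE s → (S0 s ∨ S1 s) →
    PayoffRel s f10 → AcBes s := by
  intro s hc
  induction hc with
  | leaf f => intro _ _ _; exact acBes_leaf f
  | down p sd sr hcd ih =>
      intro hspe hs hp
      rcases hs with h0 | h1
      · obtain ⟨s', he, _, _⟩ := step_f10_s0 h0 hp
        exact absurd (snode_inj he).2.1 (by simp)
      · obtain ⟨c, s', he, hs0, hp'⟩ := step_f10_s1 hspe h1 hp
        obtain ⟨hpB, hcc, hsd, hsr⟩ := snode_inj he
        apply acBes_fold
        intro p' c' f t' he'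
        obtain ⟨hp2, hc2, hsd2, hsr2⟩ := snode_inj he'
        refine Or.inr ⟨hp2 ▸ hpB, ?_, Or.inl hc2.symm⟩
        have : sleaf f = sleaf f10 := hsd2.symm.trans hsd
        exact sleaf_inj this
  | right p sd sr hcr ih =>
      intro hspe hs hp
      rcases hs with h0 | h1
      · obtain ⟨s', he, hs1, hp'⟩ := step_f10_s0 h0 hp
        obtain ⟨hpA, hcc, hsd, hsr⟩ := snode_inj he
        have hAc' : AcBes sr := by
          refine ih ((box_dest hspe).2 _ _ _ _ rfl).2 (Or.inr (hsr ▸ hs1)) (hsr ▸ hp')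
        apply acBes_fold
        intro p' c' f t' he'
        obtain ⟨hp2, hc2, hsd2, hsr2⟩ := snode_inj he'
        refine Or.inl ⟨hp2 ▸ hpA, ?_, hc2 ▸ rfl, hsr2 ▸ hAc'⟩
        have : sleaf f = sleaf f01 := hsd2.symm.trans hsd
        exact sleaf_inj this
      · obtain ⟨c, s', he, hs0, hp'⟩ := step_f10_s1 hspe h1 hp
        obtain ⟨hpB, hcc, hsd, hsr⟩ := snode_inj he
        have hAc' : AcBes sr := by
          refine ih ((box_dest hspe).2 _ _ _ _ rfl).2 (Or.inl (hsr ▸ hs0)) (hsr ▸ hp')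
        apply acBes_fold
        intro p' c' f t' he'
        obtain ⟨hp2, hc2, hsd2, hsr2⟩ := snode_inj he'
        refine Or.inr ⟨hp2 ▸ hpB, ?_, Or.inr (hsr2 ▸ hAc')⟩
        have : sleaf f = sleaf f10 := hsd2.symm.trans hsd
        exact sleaf_inj this

lemma bcAes_of_inv : ∀ s : StratProf, Conv s → SPE s → (S0 s ∨ S1 s) →
    PayoffRel s f01 → BcAes s := by
  intro s hc
  induction hc with
  | leaf f => intro _ _ _; exact bcAes_leaf f
  | down p sd sr hcd ih =>
      intro hspe hs hp
      rcases hs with h0 | h1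
      · obtain ⟨c, s', he, hs1, hp'⟩ := step_f01_s0 hspe h0 hp
        obtain ⟨hpA, hcc, hsd, hsr⟩ := snode_inj he
        apply bcAes_fold
        intro p' c' f t' he'
        obtain ⟨hp2, hc2, hsd2, hsr2⟩ := snode_inj he'
        refine Or.inr ⟨hp2 ▸ hpA, ?_, Or.inl hc2.symm⟩
        have : sleaf f = sleaf f01 := hsd2.symm.trans hsd
        exact sleaf_inj this
      · obtain ⟨s', he, _, _⟩ := step_f01_s1 h1 hp
        exact absurd (snode_inj he).2.1 (by simp)
  | right p sd sr hcr ih =>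
      intro hspe hs hp
      rcases hs with h0 | h1
      · obtain ⟨c, s', he, hs1, hp'⟩ := step_f01_s0 hspe h0 hp
        obtain ⟨hpA, hcc, hsd, hsr⟩ := snode_inj he
        have hBc' : BcAes sr := by
          refine ih ((box_dest hspe).2 _ _ _ _ rfl).2 (Or.inr (hsr ▸ hs1)) (hsr ▸ hp')
        apply bcAes_fold
        intro p' c' f t' he'
        obtain ⟨hp2, hc2, hsd2, hsr2⟩ := snode_inj he'
        refine Or.inr ⟨hp2 ▸ hpA, ?_, Or.inr (hsr2 ▸ hBc')⟩
        have : sleaf f = sleaf f01 := hsd2.symm.trans hsd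
        exact sleaf_inj this
      · obtain ⟨s', he, hs0, hp'⟩ := step_f01_s1 h1 hp
        obtain ⟨hpB, hcc, hsd, hsr⟩ := snode_inj he
        have hBc' : BcAes sr := by
          refine ih ((box_dest hspe).2 _ _ _ _ rfl).2 (Or.inl (hsr ▸ hs0)) (hsr ▸ hp')
        apply bcAes_fold
        intro p' c' f t' he'
        obtain ⟨hp2, hc2, hsd2, hsr2⟩ := snode_inj he'
        refine Or.inl ⟨hp2 ▸ hpB, ?_, hc2 ▸ rfl, hsr2 ▸ hBc'⟩
        have : sleaf f = sleaf f10 := hsd2.symm.trans hsd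
        exact sleaf_inj this

lemma boxAcBes_of_f10 {s : StratProf} (hspe : SPE s) (hs : S0 s ∨ S1 s)
    (hp : PayoffRel s f10) : Box AcBes s := by
  refine ⟨fun u => (∃ f, u = sleaf f) ∨ (SPE u ∧ (S0 u ∨ S1 u) ∧ PayoffRel u f10),
    Or.inr ⟨hspe, hs, hp⟩, ?_⟩
  rintro t (⟨f, rfl⟩ | ⟨ht1, ht2, ht3⟩)
  · exact ⟨acBes_leaf f, fun p c sd sr he => absurd he sleaf_ne_snode⟩
  · have hconv : Conv t := sconv_conv (box_dest ht1).1.1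
    refine ⟨acBes_of_inv t hconv ht1 ht2 ht3, ?_⟩
    intro p c sd sr he
    rcases ht2 with h0 | h1
    · obtain ⟨s', he', hs1, hp'⟩ := step_f10_s0 h0 ht3
      obtain ⟨_, _, hsd, hsr⟩ := snode_inj (he.symm.trans he')
      exact ⟨Or.inl ⟨f01, hsd⟩,
        Or.inr ⟨hsr ▸ ((box_dest ht1).2 _ _ _ _ he').2, Or.inr (hsr ▸ hs1), hsr ▸ hp'⟩⟩
    · obtain ⟨c', s', he', hs0, hp'⟩ := step_f10_s1 ht1 h1 ht3
      obtain ⟨_, _, hsd, hsr⟩ := snode_inj (he.symm.trans he')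
      exact ⟨Or.inl ⟨f10, hsd⟩,
        Or.inr ⟨hsr ▸ ((box_dest ht1).2 _ _ _ _ he').2, Or.inl (hsr ▸ hs0), hsr ▸ hp'⟩⟩

lemma boxBcAes_of_f01 {s : StratProf} (hspe : SPE s) (hs : S0 s ∨ S1 s)
    (hp : PayoffRel s f01) : Box BcAes s := by
  refine ⟨fun u => (∃ f, u = sleaf f) ∨ (SPE u ∧ (S0 u ∨ S1 u) ∧ PayoffRel u f01),
    Or.inr ⟨hspe, hs, hp⟩, ?_⟩
  rintro t (⟨f, rfl⟩ | ⟨ht1, ht2, ht3⟩)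
  · exact ⟨bcAes_leaf f, fun p c sd sr he => absurd he sleaf_ne_snode⟩
  · have hconv : Conv t := sconv_conv (box_dest ht1).1.1
    refine ⟨bcAes_of_inv t hconv ht1 ht2 ht3, ?_⟩
    intro p c sd sr he
    rcases ht2 with h0 | h1
    · obtain ⟨c', s', he', hs1, hp'⟩ := step_f01_s0 ht1 h0 ht3
      obtain ⟨_, _, hsd, hsr⟩ := snode_inj (he.symm.trans he')
      exact ⟨Or.inl ⟨f01, hsd⟩,
        Or.inr ⟨hsr ▸ ((box_dest ht1).2 _ _ _ _ he').2, Or.inr (hsr ▸ hs1), hsr ▸ hp'⟩⟩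
    · obtain ⟨s', he', hs0, hp'⟩ := step_f01_s1 h1 ht3
      obtain ⟨_, _, hsd, hsr⟩ := snode_inj (he.symm.trans he')
      exact ⟨Or.inl ⟨f10, hsd⟩,
        Or.inr ⟨hsr ▸ ((box_dest ht1).2 _ _ _ _ he').2, Or.inl (hsr ▸ hs0), hsr ▸ hp'⟩⟩
/-- characterization of the subgame perfect equilibria of the 0,1-game. -/
theorem spe_characterization :
    ∀ s : StratProf, (S0 s ∨ S1 s) → ((SAcBes s ∨ SBcAes s) ↔ SPE s) := by
  intro s hs
  constructor
  · rintro (hA | hB)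
    · exact spe_of_boxAcBes hA hs
    · exact spe_of_boxBcAes hB hs
  · intro hspe
    have hpe := (box_dest hspe).1
    obtain ⟨f, hf⟩ := conv_payoff (sconv_conv hpe.1)
    rcases payoff_val hf hs with rfl | rfl
    · exact Or.inr (boxBcAes_of_f01 hspe hs hf)
    · exact Or.inl (boxAcBes_of_f10 hspe hs hf)
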